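/- arXiv:2506.04400 — 3 statements merged into one kernel-verified Lean document; each statement's English description precedes it below -/
import Mathlib

section
/- For any d×d complex matrix A, det(I_d + A) = Σ_{n=0}^d (1/n!) Σ_{σ ∈ S_n} sgn(σ) · Π_{c} tr(A^{ℓ(c)}), where the product is over all disjoint cycles c of σ (fixed points counted as cycles of length 1) and ℓ(c) denotes the length of the cycle c; equivalently the inner product equals (tr A)^{f(σ)} · Π_{c nontrivial} tr(A^{ℓ(c)}) where f(σ) is the number of fixed points of σ. -/
open Matrix

namespace DetSumAux

open Equiv Equiv.Perm Finset Function

variable {d : ℕ} (A : Matrix (Fin d) (Fin d) ℂ)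

/-- The weight of a permutation: sum over all labellings of the product of matrix
entries along the arrows of the permutation. -/
noncomputable def TT {ι : Type} [Fintype ι] [DecidableEq ι] (π : Equiv.Perm ι) : ℂ :=
  ∑ g : ι → Fin d, ∏ i, A (g i) (g (π i))

lemma TT_inst {ι : Type} {f1 f2 : Fintype ι} {e1 e2 : DecidableEq ι} (π : Equiv.Perm ι) :
    @TT d A ι f1 e1 π = @TT d A ι f2 e2 π := by
  obtain rfl : f1 = f2 := Subsingleton.elim f1 f2
  obtain rfl : e1 = e2 := by funext a b; exact Subsingleton.elim _ _
  rfl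

lemma sign_inst {α : Type} {e : DecidableEq α} {f1 f2 : Fintype α} (π : Equiv.Perm α) :
    @Equiv.Perm.sign α e f1 π = @Equiv.Perm.sign α e f2 π := by
  obtain rfl : f1 = f2 := Subsingleton.elim f1 f2
  rfl

lemma univ_prod_inst {α : Type} {f1 f2 : Fintype α} (g : α → ℂ) :
    (@Finset.univ α f1).prod g = (@Finset.univ α f2).prod g := by
  obtain rfl : f1 = f2 := Subsingleton.elim f1 f2
  rfl

lemma TT_permCongr {ι κ : Type} [Fintype ι] [DecidableEq ι] [Fintype κ] [DecidableEq κ]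
    (e : ι ≃ κ) (π : Equiv.Perm ι) : TT A (e.permCongr π) = TT A π := by
  unfold TT
  rw [← Equiv.sum_comp (Equiv.arrowCongr e (Equiv.refl (Fin d)))
    (fun g : κ → Fin d => ∏ j, A (g j) (g (e.permCongr π j)))]
  refine Finset.sum_congr rfl fun g _ => ?_
  rw [← Equiv.prod_comp e
    (fun j : κ => A ((Equiv.arrowCongr e (Equiv.refl (Fin d)) g) j)
      ((Equiv.arrowCongr e (Equiv.refl (Fin d)) g) (e.permCongr π j)))]
  refine Finset.prod_congr rfl fun i _ => ?_
  simp

lemma TT_one {ι : Type} [Fintype ι] [DecidableEq ι] :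
    TT A (1 : Equiv.Perm ι) = Matrix.trace A ^ Fintype.card ι := by
  unfold TT
  have htr : Matrix.trace A = ∑ x, A x x := rfl
  simp only [Equiv.Perm.one_apply]
  rw [htr, ← Finset.card_univ, ← Finset.prod_const,
    Fintype.prod_sum (fun (_ : ι) (x : Fin d) => A x x)]

lemma TT_sumCongr {ι κ : Type} [Fintype ι] [DecidableEq ι] [Fintype κ] [DecidableEq κ]
    (π₁ : Equiv.Perm ι) (π₂ : Equiv.Perm κ) :
    TT A (Equiv.sumCongr π₁ π₂) = TT A π₁ * TT A π₂ := by
  unfold TT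
  rw [Fintype.sum_mul_sum]
  rw [← Equiv.sum_comp (Equiv.sumArrowEquivProdArrow ι κ (Fin d)).symm
    (fun g : ι ⊕ κ → Fin d => ∏ x, A (g x) (g (Equiv.sumCongr π₁ π₂ x)))]
  rw [Fintype.sum_prod_type]
  refine Finset.sum_congr rfl fun u _ => Finset.sum_congr rfl fun v _ => ?_
  rw [Fintype.prod_sum_type]
  simp [Equiv.sumArrowEquivProdArrow]

lemma TT_subtypeCongr {ι : Type} [Fintype ι] [DecidableEq ι] (p : ι → Prop) [DecidablePred p]
    (ep : Equiv.Perm {i // p i}) (en : Equiv.Perm {i // ¬ p i}) :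
    TT A (ep.subtypeCongr en) = TT A ep * TT A en := by
  rw [show ep.subtypeCongr en = (Equiv.sumCompl p).permCongr (Equiv.sumCongr ep en) from rfl]
  rw [TT_permCongr, TT_sumCongr]

lemma TT_split {ι : Type} [Fintype ι] [DecidableEq ι] (π : Equiv.Perm ι) (p : ι → Prop)
    [DecidablePred p] (h : ∀ i, p i ↔ p (π i)) :
    TT A π = TT A (π.subtypePerm (fun i => (h i).symm)) *
      TT A (π.subtypePerm (fun i => not_congr (h i).symm) : Equiv.Perm {i // ¬ p i}) := by
  rw [← TT_subtypeCongr]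
  congr 1
  ext i
  by_cases hi : p i
  · rw [Equiv.Perm.subtypeCongr.left_apply _ _ hi]
    simp
  · rw [Equiv.Perm.subtypeCongr.right_apply _ _ hi]
    simp

lemma pow_path (ℓ : ℕ) (x y : Fin d) :
    (A ^ (ℓ + 1)) x y =
      ∑ w : Fin ℓ → Fin d,
        (∏ k : Fin ℓ, A (Fin.cons (α := fun _ => Fin d) x w k.castSucc) (w k)) * A (Fin.cons (α := fun _ => Fin d) x w (Fin.last ℓ)) y := by
  induction ℓ generalizing x y with
  | zero => simp
  | succ ℓ ih =>
    rw [pow_succ', Matrix.mul_apply]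
    simp_rw [ih, Finset.mul_sum]
    rw [← Equiv.sum_comp (Fin.consEquiv (fun _ : Fin (ℓ + 1) => Fin d))
      (fun w : Fin (ℓ + 1) → Fin d =>
        (∏ k : Fin (ℓ + 1), A (Fin.cons (α := fun _ => Fin d) x w k.castSucc) (w k)) *
          A (Fin.cons (α := fun _ => Fin d) x w (Fin.last (ℓ + 1))) y)]
    rw [Fintype.sum_prod_type]
    refine Finset.sum_congr rfl fun z _ => Finset.sum_congr rfl fun w _ => ?_
    have hcons : (Fin.consEquiv (fun _ : Fin (ℓ + 1) => Fin d)) (z, w) = Fin.cons (α := fun _ => Fin d) z w := rfl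
    rw [hcons, Fin.prod_univ_succ]
    have h0 : (Fin.cons (α := fun _ => Fin d) x (Fin.cons (α := fun _ => Fin d) z w) ((0 : Fin (ℓ+1)).castSucc) : Fin d) = x := by
      simp
    have hsucc : ∀ k : Fin ℓ,
        (Fin.cons (α := fun _ => Fin d) x (Fin.cons (α := fun _ => Fin d) z w) (k.succ.castSucc) : Fin d) = Fin.cons (α := fun _ => Fin d) z w k.castSucc := by
      intro k
      rw [← Fin.succ_castSucc, Fin.cons_succ]
    have hlast : (Fin.cons (α := fun _ => Fin d) x (Fin.cons (α := fun _ => Fin d) z w) (Fin.last (ℓ+1)) : Fin d) = Fin.cons (α := fun _ => Fin d) z w (Fin.last ℓ) := by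
      rw [← Fin.succ_last, Fin.cons_succ]
    rw [h0, hlast]
    simp only [Fin.cons_zero, Fin.cons_succ, hsucc]
    ring

lemma TT_finRotate (ℓ : ℕ) : TT A (finRotate (ℓ + 1)) = Matrix.trace (A ^ (ℓ + 1)) := by
  unfold TT
  have htr : Matrix.trace (A ^ (ℓ+1)) = ∑ x, (A ^ (ℓ+1)) x x := rfl
  rw [htr]
  simp_rw [pow_path]
  rw [← Equiv.sum_comp (Fin.consEquiv (fun _ : Fin (ℓ + 1) => Fin d))
    (fun v : Fin (ℓ + 1) → Fin d => ∏ j : Fin (ℓ + 1), A (v j) (v (finRotate (ℓ + 1) j)))]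
  rw [Fintype.sum_prod_type]
  refine Finset.sum_congr rfl fun x _ => Finset.sum_congr rfl fun w _ => ?_
  have hcons : (Fin.consEquiv (fun _ : Fin (ℓ + 1) => Fin d)) (x, w) = Fin.cons (α := fun _ => Fin d) x w := rfl
  rw [hcons, Fin.prod_univ_castSucc]
  have hadd : ∀ k : Fin ℓ, (k.castSucc : Fin (ℓ+1)) + 1 = k.succ := by
    intro k
    apply Fin.ext
    rw [Fin.val_add_one_of_lt (Fin.castSucc_lt_last k)]
    simp
  simp only [finRotate_succ_apply, hadd, Fin.cons_succ, Fin.last_add_one, Fin.cons_zero]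

lemma TT_cycle {ι : Type} [Fintype ι] [DecidableEq ι] (c : Equiv.Perm ι) (hc : c.IsCycle)
    (h : ∀ x, x ∈ c.support ↔ c x ∈ c.support) :
    TT A (c.subtypePerm (fun x => (h x).symm)) = Matrix.trace (A ^ c.support.card) := by
  have hm2 : 2 ≤ c.support.card := hc.two_le_card_support
  obtain ⟨m', hm'⟩ : ∃ m', c.support.card = m' + 1 := ⟨c.support.card - 1, by omega⟩
  have hcyc : c.IsCycleOn ↑c.support := by
    rw [Equiv.Perm.coe_support_eq_set_support]
    exact hc.isCycleOn
  obtain ⟨a, ha, -⟩ := hc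
  have ha' : a ∈ c.support := Equiv.Perm.mem_support.2 ha
  set g : Fin (m' + 1) → {x // x ∈ c.support} :=
    fun k => ⟨(c ^ (k : ℕ)) a, Equiv.Perm.pow_apply_mem_support.2 ha'⟩ with hg
  have hmod : ∀ t : ℕ, (c ^ (t % c.support.card)) a = (c ^ t) a := by
    intro t
    conv_rhs => rw [← Nat.mod_add_div t c.support.card]
    rw [pow_add, Equiv.Perm.mul_apply]
    congr 1
    rw [(hcyc.pow_apply_eq ha').2 (Dvd.intro _ rfl)]
  have ginj : Function.Injective g := by
    intro i j hij
    rw [hg, Subtype.ext_iff] at hij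
    have := (hcyc.pow_apply_eq_pow_apply ha').1 hij
    have hi := i.isLt
    have hj := j.isLt
    rw [Nat.ModEq] at this
    rw [Nat.mod_eq_of_lt (by omega), Nat.mod_eq_of_lt (by omega)] at this
    exact Fin.ext this
  have hcard : Fintype.card {x // x ∈ c.support} = m' + 1 := by
    rw [Fintype.card_coe, hm']
  have gbij : Function.Bijective g :=
    (Fintype.bijective_iff_injective_and_card g).2 ⟨ginj, by rw [Fintype.card_fin, hcard]⟩
  set e := Equiv.ofBijective g gbij with he
  have key : c.subtypePerm (fun x => (h x).symm) = e.permCongr (finRotate (m' + 1)) := by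
    apply Equiv.ext
    intro x
    obtain ⟨k, rfl⟩ := e.surjective x
    rw [Equiv.permCongr_apply, Equiv.symm_apply_apply]
    apply Subtype.ext
    show c ((c ^ (k : ℕ)) a) = ((c ^ (((finRotate (m' + 1)) k : Fin (m' + 1)) : ℕ)) a)
    rw [finRotate_succ_apply]
    have h1 : ((k + 1 : Fin (m' + 1)) : ℕ) = ((k : ℕ) + 1) % (m' + 1) := by
      simp [Fin.add_def]
    have hmod' : ∀ t : ℕ, (c ^ (t % (m' + 1))) a = (c ^ t) a := hm' ▸ hmod
    rw [h1, hmod', pow_succ', Equiv.Perm.mul_apply]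
  rw [key, TT_permCongr, TT_finRotate, hm']

lemma TT_main (N : ℕ) : ∀ {ι : Type} [Fintype ι] [DecidableEq ι] (π : Equiv.Perm ι),
    π.support.card ≤ N →
    TT A π = Matrix.trace A ^ (Fintype.card ι - π.support.card) *
      (π.cycleType.map fun ℓ => Matrix.trace (A ^ ℓ)).prod := by
  induction N with
  | zero =>
    intro ι _ _ π hπ
    have : π = 1 := by
      rwa [Nat.le_zero, Finset.card_eq_zero, Equiv.Perm.support_eq_empty_iff] at hπ
    subst this
    simp [TT_one]
  | succ N ih =>
    intro ι _ _ π hπ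
    by_cases h1 : π = 1
    · subst h1
      simp [TT_one]
    · have hne : π.cycleFactorsFinset.Nonempty := by
        rw [Finset.nonempty_iff_ne_empty]
        intro hcon
        exact h1 (Equiv.Perm.cycleFactorsFinset_eq_empty_iff.1 hcon)
      obtain ⟨c, hc⟩ := hne
      have hcyc : c.IsCycle := (Equiv.Perm.mem_cycleFactorsFinset_iff.1 hc).1
      have hceq : ∀ a ∈ c.support, c a = π a := (Equiv.Perm.mem_cycleFactorsFinset_iff.1 hc).2
      set τ := π * c⁻¹ with hτdef
      have hπτ : τ * c = π := inv_mul_cancel_right π c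
      have hdisj : Equiv.Perm.Disjoint τ c :=
        Equiv.Perm.disjoint_mul_inv_of_mem_cycleFactorsFinset hc
      have hsupdisj : _root_.Disjoint τ.support c.support := hdisj.disjoint_support
      have hπc : ∀ x ∈ c.support, π x = c x := fun x hx => (hceq x hx).symm
      have hπfixout : ∀ x, x ∉ c.support → π x = τ x := by
        intro x hx
        have hcx : c x = x := Equiv.Perm.notMem_support.1 hx
        rw [← hπτ, Equiv.Perm.mul_apply, hcx]
      have hτsup : ∀ x, τ x ∈ c.support ↔ x ∈ c.support := by
        intro x
        by_cases hxτ : x ∈ τ.support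
        · have hx1 : x ∉ c.support := Finset.disjoint_left.1 hsupdisj hxτ
          have hx2 : τ x ∉ c.support :=
            Finset.disjoint_left.1 hsupdisj (Equiv.Perm.apply_mem_support.2 hxτ)
          simp [hx1, hx2]
        · rw [Equiv.Perm.notMem_support.1 hxτ]
      have hinv : ∀ x, x ∈ c.support ↔ π x ∈ c.support := by
        intro x
        constructor
        · intro hx
          rw [hπc x hx]
          exact Equiv.Perm.apply_mem_support.2 hx
        · intro hx
          by_contra hxn
          rw [hπfixout x hxn] at hx
          exact hxn ((hτsup x).1 hx)
      have hcinv : ∀ x, x ∈ c.support ↔ c x ∈ c.support :=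
        fun x => (Equiv.Perm.apply_mem_support).symm
      rw [TT_split A π (· ∈ c.support) hinv]
      have hep : π.subtypePerm (fun x => (hinv x).symm) = c.subtypePerm (fun x => (hcinv x).symm) := by
        apply Equiv.ext
        rintro ⟨x, hx⟩
        apply Subtype.ext
        exact hπc x hx
      have hτinv : ∀ x, (¬ τ x ∈ c.support) ↔ (¬ x ∈ c.support) :=
        fun x => not_congr (hτsup x)
      have hen : π.subtypePerm (fun i => not_congr (hinv i).symm) = τ.subtypePerm (p := fun x => ¬ x ∈ c.support) hτinv := by
        apply Equiv.ext
        rintro ⟨x, hx⟩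
        apply Subtype.ext
        exact hπfixout x hx
      set τ' := τ.subtypePerm (p := fun x => ¬ x ∈ c.support) hτinv with hτ'def
      have hofsub : Equiv.Perm.ofSubtype τ' = τ := by
        apply Equiv.Perm.ofSubtype_subtypePerm
        intro x hx
        exact Finset.disjoint_left.1 hsupdisj (Equiv.Perm.mem_support.2 hx)
      have hct : τ'.cycleType = τ.cycleType := by
        rw [← hofsub, Equiv.Perm.cycleType_ofSubtype]
      have hsupcard : τ'.support.card = τ.support.card := by
        rw [← hofsub, Equiv.Perm.support_ofSubtype, Finset.card_map]
      have hm2 := hcyc.two_le_card_support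
      have hcards : τ.support.card + c.support.card = π.support.card := by
        rw [← hπτ, hdisj.card_support_mul]
      have hb : τ'.support.card ≤ N := by omega
      have hcard' : Fintype.card {i // ¬ i ∈ c.support} = Fintype.card ι - c.support.card := by
        rw [Fintype.card_subtype_compl]
        congr 1
        exact (Fintype.card_congr (Equiv.refl _)).trans (Fintype.card_coe _)
      have hctπ : π.cycleType = τ.cycleType + c.cycleType := by
        rw [← hπτ, hdisj.cycleType_mul]
      have final : Matrix.trace (A ^ c.support.card) * TT A τ' =
          Matrix.trace A ^ (Fintype.card ι - π.support.card) *
            (Multiset.map (fun ℓ => Matrix.trace (A ^ ℓ)) π.cycleType).prod := by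
        rw [ih τ' hb, hct, hcard', hsupcard, hctπ, hcyc.cycleType]
        have hexp : Fintype.card ι - π.support.card =
            Fintype.card ι - c.support.card - τ.support.card := by omega
        rw [hexp]
        simp only [Multiset.map_add, Multiset.prod_add, Multiset.map_coe, List.map_cons,
          List.map_nil, Multiset.prod_coe, List.prod_cons, List.prod_nil, mul_one,
          Multiset.map_singleton, Multiset.prod_singleton]
        ring
      rw [hep, hen]
      convert final using 2
      · exact (TT_inst A (c.subtypePerm (fun x => (hcinv x).symm))).trans (TT_cycle A c hcyc hcinv)

/-- the principal minor indexed by a subset -/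
noncomputable def minor (S : Finset (Fin d)) : ℂ :=
  (A.submatrix (fun i : {x // x ∈ S} => (i : Fin d)) (fun i : {x // x ∈ S} => (i : Fin d))).det

lemma sum_perm_mul (n : ℕ) (f : Fin n → Fin d) :
    ∑ σ : Equiv.Perm (Fin n), ((Equiv.Perm.sign σ : ℤ) : ℂ) * ∏ i, A (f i) (f (σ i)) =
      (A.submatrix f f).det := by
  rw [← Matrix.det_transpose, Matrix.det_apply']
  exact Finset.sum_congr rfl fun σ _ => rfl

lemma det_submatrix_eq_minor {n : ℕ} (f : Fin n → Fin d) (hf : Function.Injective f) :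
    (A.submatrix f f).det = minor A (Finset.image f Finset.univ) := by
  set S := Finset.image f Finset.univ with hS
  have hmem : ∀ i, f i ∈ S := fun i => Finset.mem_image_of_mem f (Finset.mem_univ i)
  set q : Fin n → {x // x ∈ S} := fun i => ⟨f i, hmem i⟩ with hq
  have hqinj : Function.Injective q := by
    intro i j hij
    exact hf (congrArg Subtype.val hij)
  have hqbij : Function.Bijective q := by
    refine (Fintype.bijective_iff_injective_and_card q).2 ⟨hqinj, ?_⟩
    rw [Fintype.card_coe, hS, Finset.card_image_of_injective _ hf]
    simp
  set e := Equiv.ofBijective q hqbij with he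
  have : A.submatrix f f = (A.submatrix (fun i : {x // x ∈ S} => (i : Fin d))
      (fun i : {x // x ∈ S} => (i : Fin d))).submatrix e e := by
    ext i j
    rfl
  rw [this, Matrix.det_submatrix_equiv_self]
  rfl

lemma det_submatrix_zero {n : ℕ} (f : Fin n → Fin d) (hf : ¬ Function.Injective f) :
    (A.submatrix f f).det = 0 := by
  obtain ⟨i, j, hij, hne⟩ := Function.not_injective_iff.1 hf
  refine Matrix.det_zero_of_row_eq hne ?_
  funext k
  simp [Matrix.submatrix_apply, hij]

lemma sum_f (n : ℕ) :
    ∑ f : Fin n → Fin d, (A.submatrix f f).det =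
      (n.factorial : ℂ) * ∑ S ∈ Finset.powersetCard n (Finset.univ : Finset (Fin d)),
        minor A S := by
  classical
  rw [← Finset.sum_filter_of_ne (s := Finset.univ)
    (p := fun f : Fin n → Fin d => Function.Injective f)
    (by
      intro f _ hfne
      by_contra hni
      exact hfne (det_submatrix_zero A f hni))]
  rw [Finset.sum_congr rfl (fun f hf => det_submatrix_eq_minor A f (Finset.mem_filter.1 hf).2)]
  rw [← Finset.sum_fiberwise_of_maps_to
    (g := fun f : Fin n → Fin d => Finset.image f Finset.univ)
    (t := Finset.powersetCard n (Finset.univ : Finset (Fin d)))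
    (by
      intro f hf
      rw [Finset.mem_powersetCard]
      refine ⟨Finset.subset_univ _, ?_⟩
      rw [Finset.card_image_of_injective _ (Finset.mem_filter.1 hf).2]
      simp)]
  rw [Finset.mul_sum]
  refine Finset.sum_congr rfl fun S hS => ?_
  rw [Finset.mem_powersetCard] at hS
  obtain ⟨-, hScard⟩ := hS
  have hconst : ∀ f ∈ (Finset.filter (fun f : Fin n → Fin d => Function.Injective f)
      Finset.univ).filter (fun f => Finset.image f Finset.univ = S),
      minor A (Finset.image f Finset.univ) = minor A S := by
    intro f hf
    rw [(Finset.mem_filter.1 hf).2]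
  rw [Finset.sum_congr rfl hconst, Finset.sum_const, nsmul_eq_mul]
  congr 1
  -- count the fiber
  have hfib : (Finset.filter (fun f : Fin n → Fin d => Function.Injective f)
      Finset.univ).filter (fun f => Finset.image f Finset.univ = S) =
      Finset.image (fun p : Equiv.Perm (Fin n) =>
        (fun i => ((S.orderIsoOfFin hScard (p i) : {x // x ∈ S}) : Fin d)))
        Finset.univ := by
    ext f
    simp only [Finset.mem_filter, Finset.mem_image, Finset.mem_univ, true_and]
    constructor
    · rintro ⟨hfinj, hfim⟩
      have hmem : ∀ i, f i ∈ S := by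
        intro i
        rw [← hfim]
        exact Finset.mem_image_of_mem f (Finset.mem_univ i)
      set q : Fin n → Fin n := fun i => (S.orderIsoOfFin hScard).symm ⟨f i, hmem i⟩ with hqdef
      have hqinj : Function.Injective q := by
        intro i j hij
        apply hfinj
        have := congrArg (fun x => ((S.orderIsoOfFin hScard x : {x // x ∈ S}) : Fin d)) hij
        simpa [hqdef] using this
      have hqbij := Finite.injective_iff_bijective.1 hqinj
      refine ⟨Equiv.ofBijective q hqbij, ?_⟩
      funext i
      simp [hqdef, Equiv.ofBijective_apply]
    · rintro ⟨p, rfl⟩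
      constructor
      · intro i j hij
        have h2 : (S.orderIsoOfFin hScard) (p i) = (S.orderIsoOfFin hScard) (p j) :=
          Subtype.ext hij
        exact p.injective ((S.orderIsoOfFin hScard).injective h2)
      · apply Finset.Subset.antisymm
        · intro x hx
          simp only [Finset.mem_image, Finset.mem_univ, true_and] at hx
          obtain ⟨i, rfl⟩ := hx
          exact (S.orderIsoOfFin hScard (p i)).2
        · intro x hx
          simp only [Finset.mem_image, Finset.mem_univ, true_and]
          refine ⟨p.symm ((S.orderIsoOfFin hScard).symm ⟨x, hx⟩), ?_⟩
          simp
  rw [hfib, Finset.card_image_of_injective]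
  · rw [Finset.card_univ, Fintype.card_perm, Fintype.card_fin]
  · intro p p' hpp'
    apply Equiv.ext
    intro i
    have := congrFun hpp' i
    have h2 : (S.orderIsoOfFin hScard) (p i) = (S.orderIsoOfFin hScard) (p' i) :=
      Subtype.ext this
    exact (S.orderIsoOfFin hScard).injective h2

lemma det_one_add_minors :
    (1 + A).det = ∑ S ∈ (Finset.univ : Finset (Fin d)).powerset, minor A S := by
  rw [← Matrix.det_transpose, Matrix.det_apply']
  have hterm : ∀ τ : Equiv.Perm (Fin d),
      ∏ i, (1 + A)ᵀ (τ i) i =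
        ∑ t : Finset (Fin d), (∏ i ∈ t, A i (τ i)) *
          (if ∀ i ∈ tᶜ, i = τ i then 1 else 0) := by
    intro τ
    have : ∀ i, (1 + A)ᵀ (τ i) i = A i (τ i) + (if i = τ i then 1 else 0) := by
      intro i
      rw [Matrix.transpose_apply, Matrix.add_apply, Matrix.one_apply, add_comm]
    simp_rw [this]
    rw [Fintype.prod_add]
    refine Finset.sum_congr rfl fun t _ => ?_
    congr 1
    rw [Finset.prod_boole]
    rcases Decidable.em (∀ i ∈ tᶜ, i = τ i) with h | h
    · rw [if_pos h, if_pos h]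
    · rw [if_neg h, if_neg h]
  simp_rw [hterm, Finset.mul_sum]
  rw [Finset.sum_comm]
  have hpow : (Finset.univ : Finset (Fin d)).powerset = (Finset.univ : Finset (Finset (Fin d))) :=
    Finset.powerset_univ
  rw [hpow]
  refine Finset.sum_congr rfl fun t _ => ?_
  -- now fix t and sum over permutations
  have hstep : ∀ τ : Equiv.Perm (Fin d),
      ((Equiv.Perm.sign τ : ℤ) : ℂ) * ((∏ i ∈ t, A i (τ i)) * (if ∀ i ∈ tᶜ, i = τ i then 1 else 0))
      = if (∀ i ∈ tᶜ, i = τ i) then ((Equiv.Perm.sign τ : ℤ) : ℂ) * ∏ i ∈ t, A i (τ i) else 0 := by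
    intro τ
    rcases Decidable.em (∀ i ∈ tᶜ, i = τ i) with h | h
    · rw [if_pos h, if_pos h, mul_one]
    · rw [if_neg h, if_neg h, mul_zero, mul_zero]
  simp_rw [hstep]
  rw [← Finset.sum_filter]
  -- bijection with permutations of the subtype
  have hminor : minor A t = ∑ π : Equiv.Perm {x // x ∈ t},
      ((Equiv.Perm.sign π : ℤ) : ℂ) * ∏ x : {x // x ∈ t}, A (x : Fin d) ((π x : {x // x ∈ t}) : Fin d) := by
    unfold minor
    rw [← Matrix.det_transpose, Matrix.det_apply']
    refine Finset.sum_congr rfl fun π _ => ?_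
    congr 1
  rw [hminor]
  refine (Finset.sum_bij (fun π _ => Equiv.Perm.ofSubtype π) ?_ ?_ ?_ ?_).symm
  · intro π _
    rw [Finset.mem_filter]
    refine ⟨Finset.mem_univ _, ?_⟩
    intro i hi
    rw [Finset.mem_compl] at hi
    exact (Equiv.Perm.ofSubtype_apply_of_not_mem π hi).symm
  · intro π _ π' _ hee
    apply Equiv.ext
    intro x
    apply Subtype.ext
    have h1 := Equiv.congr_fun hee (x : Fin d)
    rwa [Equiv.Perm.ofSubtype_apply_coe, Equiv.Perm.ofSubtype_apply_coe] at h1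
  · intro τ hτ
    rw [Finset.mem_filter] at hτ
    obtain ⟨-, hfix⟩ := hτ
    have hfix' : ∀ x, τ x ≠ x → x ∈ t := by
      intro x hx
      by_contra hxn
      exact hx ((hfix x (Finset.mem_compl.2 hxn)).symm)
    have hinvt : ∀ x, x ∈ t ↔ τ x ∈ t := by
      intro x
      constructor
      · intro hx
        by_contra hn
        have h1 : τ (τ x) = τ x := (hfix (τ x) (Finset.mem_compl.2 hn)).symm
        have h2 : τ x = x := τ.injective h1
        rw [h2] at hn
        exact hn hx
      · intro hx
        by_contra hn
        have : τ x = x := (hfix x (Finset.mem_compl.2 hn)).symm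
        rw [this] at hx
        exact hn hx
    refine ⟨τ.subtypePerm (fun x => (hinvt x).symm), Finset.mem_univ _, ?_⟩
    exact Equiv.Perm.ofSubtype_subtypePerm (fun x => (hinvt x).symm) hfix'
  · intro π _
    rw [Equiv.Perm.sign_ofSubtype,
      ← Finset.prod_coe_sort t (fun i => A i (Equiv.Perm.ofSubtype π i))]
    simp only [Equiv.Perm.ofSubtype_apply_coe]

end DetSumAux

/-- **Lemma (determinant as a sum over the symmetric groups).** For a `d × d` complex
matrix `A`, `det(I + A) = Σ_{n=0}^d (1/n!) Σ_{σ ∈ S_n} sgn(σ) Π_c tr(A^{ℓ(c)})`, where the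
product runs over the disjoint cycles of `σ`; fixed points (cycles of length 1) contribute
the factor `tr(A)^{#fixed points}` and the nontrivial cycles are recorded by `σ.cycleType`. -/
theorem det_one_add_eq_sum_over_symmetric_groups (d : ℕ) (A : Matrix (Fin d) (Fin d) ℂ) :
    Matrix.det (1 + A) =
      ∑ n ∈ Finset.range (d + 1), (n.factorial : ℂ)⁻¹ *
        ∑ σ : Equiv.Perm (Fin n), ((Equiv.Perm.sign σ : ℤ) : ℂ) *
          (Matrix.trace A ^ (n - σ.support.card) *
            ((σ.cycleType.map fun ℓ => Matrix.trace (A ^ ℓ)).prod)) := by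
  classical
  have hstep : ∀ n : ℕ,
      ∑ σ : Equiv.Perm (Fin n), ((Equiv.Perm.sign σ : ℤ) : ℂ) *
          (Matrix.trace A ^ (n - σ.support.card) *
            ((σ.cycleType.map fun ℓ => Matrix.trace (A ^ ℓ)).prod)) =
      (n.factorial : ℂ) * ∑ S ∈ Finset.powersetCard n (Finset.univ : Finset (Fin d)),
        DetSumAux.minor A S := by
    intro n
    have h1 : ∀ σ : Equiv.Perm (Fin n),
        Matrix.trace A ^ (n - σ.support.card) *
          ((σ.cycleType.map fun ℓ => Matrix.trace (A ^ ℓ)).prod) = DetSumAux.TT A σ := by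
      intro σ
      rw [DetSumAux.TT_main A σ.support.card σ le_rfl]
      rw [Fintype.card_fin]
    simp_rw [h1]
    unfold DetSumAux.TT
    simp_rw [Finset.mul_sum]
    rw [Finset.sum_comm]
    rw [Finset.sum_congr rfl (fun f _ => DetSumAux.sum_perm_mul A n f)]
    rw [DetSumAux.sum_f A n, Finset.mul_sum]
  simp_rw [hstep]
  have hfac : ∀ n : ℕ, (n.factorial : ℂ)⁻¹ * ((n.factorial : ℂ) *
      ∑ S ∈ Finset.powersetCard n (Finset.univ : Finset (Fin d)), DetSumAux.minor A S) =
      ∑ S ∈ Finset.powersetCard n (Finset.univ : Finset (Fin d)), DetSumAux.minor A S := by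
    intro n
    rw [← mul_assoc, inv_mul_cancel₀ (by exact_mod_cast n.factorial_ne_zero), one_mul]
  simp_rw [hfac]
  rw [DetSumAux.det_one_add_minors A]
  rw [Finset.sum_powerset]
  congr 1
  rw [Finset.card_univ, Fintype.card_fin]
end

section
/- Let X = (X_1,…,X_g) be a g-tuple of k×k complex matrices and Y = (Y_1,…,Y_g) a g-tuple of k'×k' complex matrices. Then the spectral radius of Σ_{j=1}^g X_j ⊗ conj(Y_j) is at most rad_out(X) · rad_out(Y), i.e. at most (spectral radius of Σ_j X_j ⊗ conj(X_j))^{1/2} · (spectral radius of Σ_j Y_j ⊗ conj(Y_j))^{1/2}. -/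
open Matrix Finset Filter
open scoped Kronecker ENNReal NNReal Topology

attribute [local instance] Matrix.linftyOpNormedRing Matrix.linftyOpNormedAlgebra

namespace SRKronAux

variable {g k k' : ℕ}

/-- ordered product of matrices along a word -/
noncomputable def wp {m : Type*} [Fintype m] [DecidableEq m] {n : ℕ}
    (T : Fin g → Matrix m m ℂ) (w : Fin n → Fin g) : Matrix m m ℂ :=
  (List.ofFn fun i => T (w i)).prod

lemma wp_zero {m : Type*} [Fintype m] [DecidableEq m] (T : Fin g → Matrix m m ℂ) (w : Fin 0 → Fin g) :
    wp T w = 1 := by simp [wp]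

lemma wp_succ {m : Type*} [Fintype m] [DecidableEq m] {n : ℕ} (T : Fin g → Matrix m m ℂ)
    (w : Fin (n + 1) → Fin g) :
    wp T w = T (w 0) * wp T (fun i => w i.succ) := by
  simp [wp, List.ofFn_succ]

lemma sum_pow_expand {m : Type*} [Fintype m] [DecidableEq m] (T : Fin g → Matrix m m ℂ) :
    ∀ n : ℕ, (∑ j, T j) ^ n = ∑ w : Fin n → Fin g, wp T w
  | 0 => by simp [wp]
  | (n + 1) => by
    calc (∑ j, T j) ^ (n + 1) = (∑ j, T j) * (∑ j, T j) ^ n := pow_succ' _ _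
      _ = ∑ j, ∑ w : Fin n → Fin g, T j * wp T w := by
          rw [sum_pow_expand T n, Finset.sum_mul_sum]
      _ = ∑ p : Fin g × (Fin n → Fin g), T p.1 * wp T p.2 := by
          rw [Fintype.sum_prod_type]
      _ = ∑ w : Fin (n + 1) → Fin g, wp T w := by
          apply Fintype.sum_equiv (Fin.consEquiv fun _ => Fin g)
          intro p
          rw [wp_succ]
          simp [Fin.consEquiv]

lemma wp_kronecker (X : Fin g → Matrix (Fin k) (Fin k) ℂ)
    (Y : Fin g → Matrix (Fin k') (Fin k') ℂ) :
    ∀ {n : ℕ} (w : Fin n → Fin g),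
      wp (fun j => X j ⊗ₖ (Y j).map (starRingEnd ℂ)) w
        = wp X w ⊗ₖ (wp Y w).map (starRingEnd ℂ)
  | 0, w => by
      rw [wp_zero, wp_zero, wp_zero, Matrix.map_one _ (map_zero _) (map_one _),
        Matrix.one_kronecker_one]
  | (n + 1), w => by
      rw [wp_succ, wp_succ, wp_succ, wp_kronecker X Y (fun i => w i.succ),
        Matrix.map_mul, Matrix.mul_kronecker_mul]

lemma entry_sq_le (X : Fin g → Matrix (Fin k) (Fin k) ℂ)
    (Y : Fin g → Matrix (Fin k') (Fin k') ℂ) (n : ℕ) (i l : Fin k) (i' l' : Fin k') :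
    ‖((∑ j, X j ⊗ₖ (Y j).map (starRingEnd ℂ)) ^ n) (i, i') (l, l')‖ ^ 2 ≤
      ‖((∑ j, X j ⊗ₖ (X j).map (starRingEnd ℂ)) ^ n) (i, i) (l, l)‖ *
        ‖((∑ j, Y j ⊗ₖ (Y j).map (starRingEnd ℂ)) ^ n) (i', i') (l', l')‖ := by
  rw [sum_pow_expand, sum_pow_expand, sum_pow_expand]
  simp only [Matrix.sum_apply, wp_kronecker, Matrix.kroneckerMap_apply, Matrix.map_apply]
  set a : (Fin n → Fin g) → ℂ := fun w => wp X w i l with ha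
  set b : (Fin n → Fin g) → ℂ := fun w => wp Y w i' l' with hb
  have habs : ∀ c : (Fin n → Fin g) → ℂ,
      ‖∑ w, c w * (starRingEnd ℂ) (c w)‖ = ∑ w, ‖c w‖ ^ 2 := by
    intro c
    have h1 : ∑ w : Fin n → Fin g, c w * (starRingEnd ℂ) (c w)
        = ((∑ w, ‖c w‖ ^ 2 : ℝ) : ℂ) := by
      rw [Complex.ofReal_sum]
      refine Finset.sum_congr rfl fun w _ => ?_
      rw [Complex.mul_conj, Complex.normSq_eq_norm_sq]
    rw [h1, Complex.norm_real, Real.norm_of_nonneg (by positivity)]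
  rw [habs a, habs b]
  calc ‖∑ w, a w * (starRingEnd ℂ) (b w)‖ ^ 2
      ≤ (∑ w, ‖a w‖ * ‖b w‖) ^ 2 := by
        apply pow_le_pow_left₀ (norm_nonneg _)
        refine (norm_sum_le _ _).trans (le_of_eq ?_)
        refine Finset.sum_congr rfl fun w _ => ?_
        rw [norm_mul, RCLike.norm_conj]
    _ ≤ (∑ w, ‖a w‖ ^ 2) * ∑ w, ‖b w‖ ^ 2 :=
        Finset.sum_mul_sq_le_sq_mul_sq _ _ _

lemma entry_le_linfty {m : Type*} [Fintype m] [DecidableEq m] (M : Matrix m m ℂ) (p q : m) :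
    ‖M p q‖₊ ≤ ‖M‖₊ := by
  rw [Matrix.linfty_opNNNorm_def]
  exact le_trans
    (Finset.single_le_sum (f := fun j => ‖M p j‖₊) (fun _ _ => zero_le) (mem_univ q))
    (Finset.le_sup (f := fun i => ∑ j, ‖M i j‖₊) (mem_univ p))

lemma nnnorm_zpow_le (X : Fin g → Matrix (Fin k) (Fin k) ℂ)
    (Y : Fin g → Matrix (Fin k') (Fin k') ℂ) (n : ℕ) :
    ‖(∑ j, X j ⊗ₖ (Y j).map (starRingEnd ℂ)) ^ n‖₊ ≤
      ((k * k' : ℕ) : ℝ≥0) *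
        NNReal.sqrt (‖(∑ j, X j ⊗ₖ (X j).map (starRingEnd ℂ)) ^ n‖₊ *
          ‖(∑ j, Y j ⊗ₖ (Y j).map (starRingEnd ℂ)) ^ n‖₊) := by
  set Z := (∑ j, X j ⊗ₖ (Y j).map (starRingEnd ℂ)) ^ n with hZ
  set A := (∑ j, X j ⊗ₖ (X j).map (starRingEnd ℂ)) ^ n with hA
  set B := (∑ j, Y j ⊗ₖ (Y j).map (starRingEnd ℂ)) ^ n with hB
  rw [Matrix.linfty_opNNNorm_def]
  refine Finset.sup_le fun p _ => ?_
  have hentry : ∀ q : Fin k × Fin k', ‖Z p q‖₊ ≤ NNReal.sqrt (‖A‖₊ * ‖B‖₊) := by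
    intro q
    have h1 : ‖Z p q‖₊ ^ 2 ≤ ‖A (p.1, p.1) (q.1, q.1)‖₊ * ‖B (p.2, p.2) (q.2, q.2)‖₊ := by
      rw [← NNReal.coe_le_coe]
      push_cast
      simpa using entry_sq_le X Y n p.1 q.1 p.2 q.2
    have h2 : ‖Z p q‖₊ ^ 2 ≤ ‖A‖₊ * ‖B‖₊ :=
      h1.trans (mul_le_mul' (entry_le_linfty A _ _) (entry_le_linfty B _ _))
    calc ‖Z p q‖₊ = NNReal.sqrt (‖Z p q‖₊ ^ 2) := (NNReal.sqrt_sq _).symm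
      _ ≤ NNReal.sqrt (‖A‖₊ * ‖B‖₊) := NNReal.sqrt_le_sqrt.mpr h2
  calc ∑ q, ‖Z p q‖₊ ≤ ∑ _q : Fin k × Fin k', NNReal.sqrt (‖A‖₊ * ‖B‖₊) :=
        Finset.sum_le_sum fun q _ => hentry q
    _ = ((k * k' : ℕ) : ℝ≥0) * NNReal.sqrt (‖A‖₊ * ‖B‖₊) := by
        simp [Finset.sum_const, Finset.card_univ, nsmul_eq_mul]

end SRKronAux

open SRKronAux

/-- **Proposition (Cauchy–Schwarz for the outer spectral radius).** For `g`-tuples `X` of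
`k × k` and `Y` of `k' × k'` complex matrices, the spectral radius of
`Σⱼ Xⱼ ⊗ conj(Yⱼ)` is at most `rad_out(X) · rad_out(Y)`. -/
theorem spectralRadius_kronecker_le_outer_mul_outer (g k k' : ℕ)
    (X : Fin g → Matrix (Fin k) (Fin k) ℂ) (Y : Fin g → Matrix (Fin k') (Fin k') ℂ) :
    spectralRadius ℂ (∑ j, X j ⊗ₖ (Y j).map (starRingEnd ℂ)) ≤
      spectralRadius ℂ (∑ j, X j ⊗ₖ (X j).map (starRingEnd ℂ)) ^ (1 / 2 : ℝ) *
        spectralRadius ℂ (∑ j, Y j ⊗ₖ (Y j).map (starRingEnd ℂ)) ^ (1 / 2 : ℝ) := by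
  classical
  set Z := ∑ j, X j ⊗ₖ (Y j).map (starRingEnd ℂ) with hZdef
  set A := ∑ j, X j ⊗ₖ (X j).map (starRingEnd ℂ) with hAdef
  set B := ∑ j, Y j ⊗ₖ (Y j).map (starRingEnd ℂ) with hBdef
  -- degenerate cases
  rcases Nat.eq_zero_or_pos k with hk0 | hkpos
  · subst hk0
    haveI : Subsingleton (Matrix (Fin 0 × Fin k') (Fin 0 × Fin k') ℂ) :=
      ⟨fun M N => by ext p q; exact p.1.elim0⟩
    have hσ : spectrum ℂ Z = ∅ :=
      Set.eq_empty_iff_forall_notMem.2 fun μ hμ =>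
        (spectrum.mem_iff.mp hμ) (isUnit_of_subsingleton _)
    have : spectralRadius ℂ Z = ⨆ μ ∈ (∅ : Set ℂ), (‖μ‖₊ : ℝ≥0∞) := by
      rw [← hσ]; rfl
    rw [this]
    simp
  rcases Nat.eq_zero_or_pos k' with hk0' | hkpos'
  · subst hk0'
    haveI : Subsingleton (Matrix (Fin k × Fin 0) (Fin k × Fin 0) ℂ) :=
      ⟨fun M N => by ext p q; exact p.2.elim0⟩
    have hσ : spectrum ℂ Z = ∅ :=
      Set.eq_empty_iff_forall_notMem.2 fun μ hμ =>
        (spectrum.mem_iff.mp hμ) (isUnit_of_subsingleton _)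
    have : spectralRadius ℂ Z = ⨆ μ ∈ (∅ : Set ℂ), (‖μ‖₊ : ℝ≥0∞) := by
      rw [← hσ]; rfl
    rw [this]
    simp
  haveI : Nonempty (Fin k) := Fin.pos_iff_nonempty.mp hkpos
  haveI : Nonempty (Fin k') := Fin.pos_iff_nonempty.mp hkpos'
  haveI : CompleteSpace (Matrix (Fin k × Fin k') (Fin k × Fin k') ℂ) :=
    FiniteDimensional.complete ℂ _
  haveI : CompleteSpace (Matrix (Fin k × Fin k) (Fin k × Fin k) ℂ) :=
    FiniteDimensional.complete ℂ _
  haveI : CompleteSpace (Matrix (Fin k' × Fin k') (Fin k' × Fin k') ℂ) :=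
    FiniteDimensional.complete ℂ _
  have hρA : spectralRadius ℂ A ^ (1 / 2 : ℝ) ≠ ⊤ := by
    apply ENNReal.rpow_ne_top_of_nonneg (by norm_num)
    exact ((spectrum.spectralRadius_le_nnnorm (𝕜 := ℂ) (a := A)).trans_lt ENNReal.coe_lt_top).ne
  have hρB : spectralRadius ℂ B ^ (1 / 2 : ℝ) ≠ ⊤ := by
    apply ENNReal.rpow_ne_top_of_nonneg (by norm_num)
    exact ((spectrum.spectralRadius_le_nnnorm (𝕜 := ℂ) (a := B)).trans_lt ENNReal.coe_lt_top).ne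
  have key : ∀ μ ∈ spectrum ℂ Z,
      (‖μ‖₊ : ℝ≥0∞) ≤ spectralRadius ℂ A ^ (1 / 2 : ℝ) * spectralRadius ℂ B ^ (1 / 2 : ℝ) := by
    intro μ hμ
    -- the per-n bound
    have hb : ∀ n : ℕ, (‖μ‖₊ : ℝ≥0∞) ≤
        (((k * k' : ℕ) : ℝ≥0) : ℝ≥0∞) ^ (1 / ((n : ℝ) + 1)) *
          (((‖A ^ (n + 1)‖₊ : ℝ≥0∞)) ^ (1 / ((n : ℝ) + 1))) ^ (1 / 2 : ℝ) *
          (((‖B ^ (n + 1)‖₊ : ℝ≥0∞)) ^ (1 / ((n : ℝ) + 1))) ^ (1 / 2 : ℝ) := by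
      intro n
      set N := n + 1 with hN
      have hμN : μ ^ N ∈ spectrum ℂ (Z ^ N) :=
        spectrum.pow_image_subset (𝕜 := ℂ) Z N ⟨μ, hμ, rfl⟩
      have h1 : ‖μ‖₊ ^ N ≤ ‖Z ^ N‖₊ := by
        rw [← nnnorm_pow]
        exact spectrum.norm_le_norm_of_mem hμN
      have h2 : ‖μ‖₊ ^ N ≤
          ((k * k' : ℕ) : ℝ≥0) * NNReal.sqrt (‖A ^ N‖₊ * ‖B ^ N‖₊) :=
        h1.trans (nnnorm_zpow_le X Y N)
      -- move to ℝ≥0∞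
      have h3 : (‖μ‖₊ : ℝ≥0∞) ^ N ≤
          (((k * k' : ℕ) : ℝ≥0) : ℝ≥0∞) *
            ((‖A ^ N‖₊ : ℝ≥0∞) ^ (1 / 2 : ℝ) * (‖B ^ N‖₊ : ℝ≥0∞) ^ (1 / 2 : ℝ)) := by
        have := ENNReal.coe_le_coe.mpr h2
        rw [ENNReal.coe_mul, ENNReal.coe_pow] at this
        refine this.trans (le_of_eq ?_)
        congr 1
        rw [NNReal.sqrt_eq_rpow, ENNReal.coe_rpow_of_nonneg _ (by norm_num : (0:ℝ) ≤ 1/2),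
          ENNReal.coe_mul, ENNReal.mul_rpow_of_ne_top ENNReal.coe_ne_top ENNReal.coe_ne_top]
      have hNR : (0 : ℝ) ≤ 1 / ((n : ℝ) + 1) := by positivity
      have h4 := ENNReal.rpow_le_rpow h3 hNR
      have hcast : ((N : ℕ) : ℝ) = (n : ℝ) + 1 := by push_cast [hN]; ring
      have hL : ((‖μ‖₊ : ℝ≥0∞) ^ N) ^ (1 / ((n : ℝ) + 1)) = (‖μ‖₊ : ℝ≥0∞) := by
        rw [one_div, ← hcast, ENNReal.pow_rpow_inv_natCast (by omega : N ≠ 0)]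
      rw [hL] at h4
      refine h4.trans (le_of_eq ?_)
      have hne1 : (((k * k' : ℕ) : ℝ≥0) : ℝ≥0∞) ≠ ⊤ := ENNReal.coe_ne_top
      have hne2 : (‖A ^ N‖₊ : ℝ≥0∞) ^ (1 / 2 : ℝ) ≠ ⊤ :=
        ENNReal.rpow_ne_top_of_nonneg (by norm_num) ENNReal.coe_ne_top
      have hne3 : (‖B ^ N‖₊ : ℝ≥0∞) ^ (1 / 2 : ℝ) ≠ ⊤ :=
        ENNReal.rpow_ne_top_of_nonneg (by norm_num) ENNReal.coe_ne_top
      rw [ENNReal.mul_rpow_of_ne_top hne1 (by exact ENNReal.mul_ne_top hne2 hne3),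
        ENNReal.mul_rpow_of_ne_top hne2 hne3]
      rw [← ENNReal.rpow_mul, ← ENNReal.rpow_mul, mul_comm (1/2 : ℝ) (1 / ((n:ℝ)+1)),
        ENNReal.rpow_mul, ENNReal.rpow_mul, ← mul_assoc]
    -- limits
    have hAlim := spectrum.pow_nnnorm_pow_one_div_tendsto_nhds_spectralRadius A
    have hBlim := spectrum.pow_nnnorm_pow_one_div_tendsto_nhds_spectralRadius B
    have hshiftA : Tendsto (fun n : ℕ => (‖A ^ (n + 1)‖₊ : ℝ≥0∞) ^ (1 / ((n : ℝ) + 1)))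
        atTop (𝓝 (spectralRadius ℂ A)) := by
      have := hAlim.comp (tendsto_add_atTop_nat 1)
      refine this.congr fun n => ?_
      simp [Function.comp, Nat.cast_add, Nat.cast_one]
    have hshiftB : Tendsto (fun n : ℕ => (‖B ^ (n + 1)‖₊ : ℝ≥0∞) ^ (1 / ((n : ℝ) + 1)))
        atTop (𝓝 (spectralRadius ℂ B)) := by
      have := hBlim.comp (tendsto_add_atTop_nat 1)
      refine this.congr fun n => ?_
      simp [Function.comp, Nat.cast_add, Nat.cast_one]
    have tA : Tendsto (fun n : ℕ =>
        ((‖A ^ (n + 1)‖₊ : ℝ≥0∞) ^ (1 / ((n : ℝ) + 1))) ^ (1 / 2 : ℝ))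
        atTop (𝓝 (spectralRadius ℂ A ^ (1 / 2 : ℝ))) :=
      (ENNReal.continuous_rpow_const.tendsto _).comp hshiftA
    have tB : Tendsto (fun n : ℕ =>
        ((‖B ^ (n + 1)‖₊ : ℝ≥0∞) ^ (1 / ((n : ℝ) + 1))) ^ (1 / 2 : ℝ))
        atTop (𝓝 (spectralRadius ℂ B ^ (1 / 2 : ℝ))) :=
      (ENNReal.continuous_rpow_const.tendsto _).comp hshiftB
    -- constant term tends to 1
    have hc0 : ((k * k' : ℕ) : ℝ≥0) ≠ 0 := by
      simp only [ne_eq, Nat.cast_eq_zero]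
      positivity
    have t1 : Tendsto (fun n : ℕ => (((k * k' : ℕ) : ℝ≥0) : ℝ≥0∞) ^ (1 / ((n : ℝ) + 1)))
        atTop (𝓝 1) := by
      have hrpos : (0 : ℝ) < ((k * k' : ℕ) : ℝ) := by positivity
      have hexp : Tendsto (fun n : ℕ => 1 / ((n : ℝ) + 1)) atTop (𝓝 0) :=
        tendsto_one_div_add_atTop_nhds_zero_nat
      have hreal : Tendsto (fun n : ℕ => ((k * k' : ℕ) : ℝ) ^ (1 / ((n : ℝ) + 1)))
          atTop (𝓝 1) := by
        have hcont := (Real.continuousAt_const_rpow (a := ((k * k' : ℕ) : ℝ))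
          (b := 0) hrpos.ne').tendsto
        have := hcont.comp hexp
        simpa [Function.comp_def, Real.rpow_zero] using this
      have hnn : Tendsto (fun n : ℕ => ((k * k' : ℕ) : ℝ≥0) ^ (1 / ((n : ℝ) + 1)))
          atTop (𝓝 (1 : ℝ≥0)) := by
        rw [← NNReal.tendsto_coe]
        simpa [NNReal.coe_rpow] using hreal
      have := (ENNReal.tendsto_coe (f := atTop)).mpr hnn
      refine this.congr fun n => ?_
      · rw [ENNReal.coe_rpow_of_ne_zero hc0]
    have hmul : Tendsto (fun n : ℕ =>
        (((k * k' : ℕ) : ℝ≥0) : ℝ≥0∞) ^ (1 / ((n : ℝ) + 1)) *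
          (((‖A ^ (n + 1)‖₊ : ℝ≥0∞)) ^ (1 / ((n : ℝ) + 1))) ^ (1 / 2 : ℝ) *
          (((‖B ^ (n + 1)‖₊ : ℝ≥0∞)) ^ (1 / ((n : ℝ) + 1))) ^ (1 / 2 : ℝ)) atTop
        (𝓝 (1 * spectralRadius ℂ A ^ (1 / 2 : ℝ) * spectralRadius ℂ B ^ (1 / 2 : ℝ))) := by
      exact ENNReal.Tendsto.mul
        (ENNReal.Tendsto.mul t1 (Or.inl one_ne_zero) tA (Or.inr ENNReal.one_ne_top))
        (Or.inr hρB) tB (Or.inr (by rw [one_mul]; exact hρA))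
    rw [one_mul] at hmul
    exact ge_of_tendsto' hmul hb
  refine iSup₂_le key
end

section
/- For every g-tuple X = (X_1,…,X_g) of k×k complex matrices and every g-tuple U = (U_1,…,U_g) of d×d complex matrices, det(I_k ⊗ I_d + Σ_{j=1}^g X_j ⊗ U_j) = Σ_{n=0}^{kd} (1/n!) Σ_{α ∈ ℕ^g, |α| = n} binom(n,α) Σ_{σ ∈ S_n} sgn(σ) · p_{σ,α}(X) · p_{σ,α}(U). -/
open Matrix
open scoped Kronecker

noncomputable section

/-- `partialSum α j = α₀ + ⋯ + α_{j-1}` (out-of-range parts count as `0`). -/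
def partialSum {g : ℕ} (α : Fin g → ℕ) (j : ℕ) : ℕ :=
  ∑ t ∈ Finset.range j, if h : t < g then α ⟨t, h⟩ else 0

/-- The index `j(i)` of the block of the multi-index `α` containing position `i`
(`0`-indexed): the unique `j` with `α₀ + ⋯ + α_{j-1} ≤ i < α₀ + ⋯ + α_j`, whenever
`i < |α|`. -/
def blockIdx {g : ℕ} (α : Fin g → ℕ) (i : ℕ) : ℕ :=
  ((Finset.range g).filter fun j => partialSum α (j + 1) ≤ i).card

/-- The matrix `A_{j(i)}` attached to position `i` by the multi-index `α`. -/
def blockMat {g m : ℕ} (α : Fin g → ℕ) (A : Fin g → Matrix (Fin m) (Fin m) ℂ) (i : ℕ) :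
    Matrix (Fin m) (Fin m) ℂ :=
  if h : blockIdx α i < g then A ⟨blockIdx α i, h⟩ else 1

/-- The tensor power `A₁^{⊗α₁} ⊗ ⋯ ⊗ A_g^{⊗α_g}`, as a matrix indexed by functions
`Fin n → Fin m`; its `(f, h)` entry is `Π_{i} (A_{j(i)})_{f i, h i}`. -/
def tensorPow (g m n : ℕ) (α : Fin g → ℕ) (A : Fin g → Matrix (Fin m) (Fin m) ℂ) :
    Matrix (Fin n → Fin m) (Fin n → Fin m) ℂ :=
  Matrix.of fun f h => ∏ i : Fin n, blockMat α A (i : ℕ) (f i) (h i)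

/-- The matrix of the operator permuting the tensor factors of `(ℂ^m)^{⊗n}` according to
`σ`: its `(f, h)` entry is `1` if `h = f ∘ σ` and `0` otherwise. -/
def permMat (m n : ℕ) (σ : Equiv.Perm (Fin n)) :
    Matrix (Fin n → Fin m) (Fin n → Fin m) ℂ :=
  Matrix.of fun f h => if h = f ∘ σ then 1 else 0

/-- The generalized power-sum trace monomial
`p_{σ,α}(A) = tr(ρ(σ⁻¹) ∘ A₁^{⊗α₁} ⊗ ⋯ ⊗ A_g^{⊗α_g})`,
equal to the product over the disjoint cycles `(i₁ ⋯ i_ℓ)` of `σ` (fixed points counted as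
`1`-cycles) of `tr(A_{j(i₁)} ⋯ A_{j(i_ℓ)})`. -/
def pPoly {g : ℕ} (m n : ℕ) (σ : Equiv.Perm (Fin n)) (α : Fin g → ℕ)
    (A : Fin g → Matrix (Fin m) (Fin m) ℂ) : ℂ :=
  Matrix.trace (permMat m n σ⁻¹ * tensorPow g m n α A)

/-! ### Auxiliary machinery -/

section Aux

set_option linter.unusedSectionVars false

/-- generic entrywise trace monomial -/
def pF {n : ℕ} {ι : Type*} [Fintype ι] (σ : Equiv.Perm (Fin n))
    (B : Fin n → Matrix ι ι ℂ) : ℂ :=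
  ∑ f : Fin n → ι, ∏ i, B i (f i) (f (σ i))

lemma pF_conj {n : ℕ} {ι : Type*} [Fintype ι] (σ τ : Equiv.Perm (Fin n))
    (B : Fin n → Matrix ι ι ℂ) :
    pF σ (fun i => B (τ i)) = pF (τ * σ * τ⁻¹) B := by
  unfold pF
  refine Fintype.sum_equiv (Equiv.arrowCongr τ (Equiv.refl ι)) _ _ (fun f => ?_)
  rw [← Equiv.prod_comp τ (fun i => B i ((Equiv.arrowCongr τ (Equiv.refl ι) f) i)
      ((Equiv.arrowCongr τ (Equiv.refl ι) f) ((τ * σ * τ⁻¹) i)))]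
  refine Finset.prod_congr rfl (fun i _ => ?_)
  simp [Equiv.arrowCongr_apply, Equiv.Perm.mul_apply, Function.comp]

lemma pF_kron {n k d : ℕ} (σ : Equiv.Perm (Fin n))
    (B : Fin n → Matrix (Fin k) (Fin k) ℂ) (C : Fin n → Matrix (Fin d) (Fin d) ℂ) :
    pF σ B * pF σ C = pF σ (fun i => B i ⊗ₖ C i) := by
  have h1 : pF σ (fun i => B i ⊗ₖ C i) = ∑ p : (Fin n → Fin k) × (Fin n → Fin d),
      (∏ i, B i (p.1 i) (p.1 (σ i))) * ∏ i, C i (p.2 i) (p.2 (σ i)) := by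
    unfold pF
    refine Fintype.sum_equiv (Equiv.arrowProdEquivProdArrow (Fin n) (fun _ => Fin k) (fun _ => Fin d)) _ _
      (fun f => ?_)
    rw [← Finset.prod_mul_distrib]
    refine Finset.prod_congr rfl (fun i _ => ?_)
    simp [Equiv.arrowProdEquivProdArrow, Matrix.kroneckerMap_apply]
  rw [h1, Fintype.sum_prod_type]
  unfold pF
  rw [Finset.sum_mul_sum]

lemma pF_sum {n g : ℕ} {ι : Type*} [Fintype ι] [DecidableEq ι] (σ : Equiv.Perm (Fin n))
    (W : Fin g → Matrix ι ι ℂ) :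
    ∑ j : Fin n → Fin g, pF σ (fun i => W (j i)) = pF σ (fun _ => ∑ t, W t) := by
  unfold pF
  rw [Finset.sum_comm]
  refine Finset.sum_congr rfl (fun f _ => ?_)
  simp only [Matrix.sum_apply]
  rw [Finset.prod_univ_sum]
  rw [← Fintype.piFinset_univ]

lemma partialSum_mono {g : ℕ} (α : Fin g → ℕ) : Monotone (partialSum α) := by
  intro a b hab
  exact Finset.sum_le_sum_of_subset (Finset.range_subset_range.2 hab)

lemma partialSum_zero {g : ℕ} (α : Fin g → ℕ) : partialSum α 0 = 0 := by
  simp [partialSum]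

lemma partialSum_g {g : ℕ} (α : Fin g → ℕ) : partialSum α g = ∑ t, α t := by
  rw [partialSum, ← Fin.sum_univ_eq_sum_range (fun t => if h : t < g then α ⟨t, h⟩ else 0) g]
  exact Finset.sum_congr rfl fun t _ => by simp [t.isLt]

lemma partialSum_succ {g : ℕ} (α : Fin g → ℕ) (t : ℕ) (ht : t < g) :
    partialSum α (t + 1) = partialSum α t + α ⟨t, ht⟩ := by
  rw [partialSum, partialSum, Finset.sum_range_succ, dif_pos ht]

lemma exists_block {g : ℕ} (α : Fin g → ℕ) {i : ℕ} (hi : i < partialSum α g) :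
    ∃ t, t < g ∧ partialSum α t ≤ i ∧ i < partialSum α (t + 1) := by
  classical
  let P : ℕ → Prop := fun t => partialSum α t ≤ i
  have hP0 : P 0 := by simp [P, partialSum_zero]
  have hPg : ¬ P g := not_le.2 hi
  have ht0le : Nat.findGreatest P g ≤ g := Nat.findGreatest_le g
  have hspec : P (Nat.findGreatest P g) := Nat.findGreatest_spec (Nat.zero_le g) hP0
  have ht0lt : Nat.findGreatest P g < g := lt_of_le_of_ne ht0le (by
    intro h; rw [h] at hspec; exact hPg hspec)
  refine ⟨Nat.findGreatest P g, ht0lt, hspec, ?_⟩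
  have := Nat.findGreatest_is_greatest (lt_add_one _) (by omega : Nat.findGreatest P g + 1 ≤ g)
  exact not_le.1 this

lemma blockIdx_eq_of {g : ℕ} (α : Fin g → ℕ) {i t : ℕ} (ht : t < g)
    (h1 : partialSum α t ≤ i) (h2 : i < partialSum α (t + 1)) : blockIdx α i = t := by
  have : (Finset.range g).filter (fun j => partialSum α (j + 1) ≤ i) = Finset.range t := by
    ext j
    simp only [Finset.mem_filter, Finset.mem_range]
    constructor
    · rintro ⟨hjg, hj⟩
      by_contra hjt
      push_neg at hjt
      exact absurd (le_trans (partialSum_mono α (by omega : t + 1 ≤ j + 1)) hj) (not_le.2 h2)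
    · intro hjt
      exact ⟨by omega, le_trans (partialSum_mono α (by omega : j + 1 ≤ t)) h1⟩
  rw [blockIdx, this, Finset.card_range]

lemma blockIdx_spec {g : ℕ} (α : Fin g → ℕ) {i : ℕ} (hi : i < partialSum α g) :
    blockIdx α i < g ∧ partialSum α (blockIdx α i) ≤ i ∧ i < partialSum α (blockIdx α i + 1) := by
  obtain ⟨t, ht, h1, h2⟩ := exists_block α hi
  rw [blockIdx_eq_of α ht h1 h2]
  exact ⟨ht, h1, h2⟩

/-- fiber counts ("content") of a function -/
def cont {n g : ℕ} (j : Fin n → Fin g) : Fin g → ℕ :=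
  fun t => (Finset.univ.filter fun i => j i = t).card

lemma sum_cont {n g : ℕ} (j : Fin n → Fin g) : ∑ t, cont j t = n := by
  have h := Finset.card_eq_sum_card_fiberwise (f := j) (t := Finset.univ)
    (s := Finset.univ) (fun i _ => Finset.mem_univ _)
  simp only [Finset.card_univ, Fintype.card_fin] at h
  exact h.symm

lemma cont_comp_perm {n g : ℕ} (j : Fin n → Fin g) (τ : Equiv.Perm (Fin n)) :
    cont (j ∘ τ) = cont j := by
  funext t
  refine Finset.card_bij' (fun i _ => τ i) (fun i _ => τ⁻¹ i) ?_ ?_ ?_ ?_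
  · intro a ha; simp only [Finset.mem_filter, Finset.mem_univ, true_and] at ha ⊢; exact ha
  · intro a ha; simp only [Finset.mem_filter, Finset.mem_univ, true_and,
      Function.comp_apply] at ha ⊢; simpa using ha
  · intro a _; simp
  · intro a _; simp

/-- permutations carrying `j` to `j0` correspond to families of fiber bijections -/
def permFiberEquiv {n g : ℕ} (j0 j : Fin n → Fin g) :
    {τ : Equiv.Perm (Fin n) // j0 ∘ τ = j} ≃
      (∀ t : Fin g, {i // j i = t} ≃ {i // j0 i = t}) where
  toFun := fun ⟨τ, hτ⟩ t =>
    { toFun := fun x => ⟨τ x, by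
        have := congrFun hτ x.val; simp only [Function.comp_apply] at this
        rw [this, x.prop]⟩
      invFun := fun y => ⟨τ⁻¹ y, by
        have := congrFun hτ (τ⁻¹ y.val); simp only [Function.comp_apply] at this
        rw [show τ (τ⁻¹ y.val) = y.val from τ.apply_symm_apply _] at this; rw [← this, y.prop]⟩
      left_inv := fun x => by simp
      right_inv := fun y => by simp }
  invFun := fun e =>
    ⟨((Equiv.sigmaFiberEquiv j).symm.trans
        ((Equiv.sigmaCongrRight e).trans (Equiv.sigmaFiberEquiv j0))), by
      funext i
      simp [Equiv.sigmaCongrRight, Equiv.sigmaFiberEquiv]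
      exact (e (j i) ⟨i, rfl⟩).prop⟩
  left_inv := fun ⟨τ, hτ⟩ => by
    ext i
    simp [Equiv.sigmaCongrRight, Equiv.sigmaFiberEquiv]
  right_inv := fun e => by
    funext t
    ext x
    obtain ⟨i, hi⟩ := x
    subst hi
    simp [Equiv.sigmaCongrRight, Equiv.sigmaFiberEquiv]

lemma card_perm_fiber {n g : ℕ} (j0 j : Fin n → Fin g) (h : cont j0 = cont j) :
    (Finset.univ.filter fun τ : Equiv.Perm (Fin n) => j0 ∘ τ = j).card
      = ∏ t, (cont j t).factorial := by
  classical
  rw [← Fintype.card_subtype]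
  rw [Fintype.card_congr (permFiberEquiv j0 j), Fintype.card_pi]
  refine Finset.prod_congr rfl fun t _ => ?_
  have hc : Fintype.card {i // j i = t} = Fintype.card {i // j0 i = t} := by
    rw [Fintype.card_subtype, Fintype.card_subtype, ← cont, ← cont, h]
  rw [Fintype.card_equiv (Fintype.equivOfCardEq hc), Fintype.card_subtype]
  rfl

lemma exists_perm_comp {n g : ℕ} (j0 j : Fin n → Fin g) (h : cont j0 = cont j) :
    ∃ τ : Equiv.Perm (Fin n), j0 ∘ τ = j := by
  refine ⟨((permFiberEquiv j0 j).symm fun t => Fintype.equivOfCardEq ?_).val,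
    ((permFiberEquiv j0 j).symm _).prop⟩
  rw [Fintype.card_subtype, Fintype.card_subtype, ← cont, ← cont, h]

lemma card_cont_eq {n g : ℕ} (α : Fin g → ℕ) (j0 : Fin n → Fin g) (h0 : cont j0 = α) :
    (Finset.univ.filter fun j : Fin n → Fin g => cont j = α).card
      = Nat.multinomial Finset.univ α := by
  classical
  set T := Finset.univ.filter fun j : Fin n → Fin g => cont j = α with hT
  have h1 : (Finset.univ : Finset (Equiv.Perm (Fin n))).card =
      ∑ j ∈ T, (Finset.univ.filter fun τ : Equiv.Perm (Fin n) => j0 ∘ ⇑τ = j).card :=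
    Finset.card_eq_sum_card_fiberwise (fun τ _ => by
      simp only [hT, Finset.coe_filter, Set.mem_setOf_eq, Finset.mem_filter, Finset.mem_univ, true_and]
      rw [cont_comp_perm, h0])
  have h2 : ∀ j ∈ T, (Finset.univ.filter fun τ : Equiv.Perm (Fin n) => j0 ∘ ⇑τ = j).card
      = ∏ t, (α t).factorial := by
    intro j hj
    have hj' : cont j = α := by
      simpa only [hT, Finset.mem_filter, Finset.mem_univ, true_and] using hj
    rw [card_perm_fiber j0 j (by rw [h0, hj']), hj']
  rw [Finset.sum_congr rfl h2, Finset.sum_const, smul_eq_mul, Finset.card_univ,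
    Fintype.card_perm, Fintype.card_fin] at h1
  have hn : ∑ t, α t = n := by rw [← h0]; exact sum_cont j0
  have spec := Nat.multinomial_spec Finset.univ α
  rw [hn] at spec
  have hpos : 0 < ∏ t, (α t).factorial := Finset.prod_pos fun t _ => Nat.factorial_pos _
  refine Nat.eq_of_mul_eq_mul_right hpos ?_
  calc T.card * ∏ t, (α t).factorial = n.factorial := h1.symm
    _ = (∏ t ∈ Finset.univ, (α t).factorial) * Nat.multinomial Finset.univ α := spec.symm
    _ = Nat.multinomial Finset.univ α * ∏ t, (α t).factorial := mul_comm _ _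

def jIdx {g n : ℕ} (α : Fin g → ℕ) (hsum : ∑ t, α t = n) (i : Fin n) : Fin g :=
  ⟨blockIdx α i, (blockIdx_spec α (by rw [partialSum_g, hsum]; exact i.isLt)).1⟩

lemma blockMat_eq {g m n : ℕ} (α : Fin g → ℕ) (hsum : ∑ t, α t = n)
    (A : Fin g → Matrix (Fin m) (Fin m) ℂ) (i : Fin n) :
    blockMat α A (i : ℕ) = A (jIdx α hsum i) := by
  rw [blockMat, dif_pos (show blockIdx α (i : ℕ) < g from (jIdx α hsum i).isLt)]
  rfl

lemma pPoly_eq_pF {g m n : ℕ} (σ : Equiv.Perm (Fin n)) (α : Fin g → ℕ) (hsum : ∑ t, α t = n)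
    (A : Fin g → Matrix (Fin m) (Fin m) ℂ) :
    pPoly m n σ α A = pF σ (fun i => A (jIdx α hsum i)) := by
  have hdiag : ∀ f : Fin n → Fin m, (permMat m n σ⁻¹ * tensorPow g m n α A) f f
      = ∏ i : Fin n, blockMat α A (i : ℕ) (f (σ⁻¹ i)) (f i) := by
    intro f
    rw [Matrix.mul_apply]
    rw [Finset.sum_eq_single (f ∘ ⇑σ⁻¹)]
    · rw [permMat, Matrix.of_apply, if_pos rfl, one_mul, tensorPow, Matrix.of_apply]
      rfl
    · intro h _ hne
      rw [permMat, Matrix.of_apply, if_neg hne, zero_mul]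
    · intro h; exact absurd (Finset.mem_univ _) h
  rw [pPoly, Matrix.trace]
  simp only [Matrix.diag_apply]
  rw [Finset.sum_congr rfl fun f _ => hdiag f]
  rw [pF]
  refine Fintype.sum_equiv (Equiv.arrowCongr (σ : Fin n ≃ Fin n) (Equiv.refl (Fin m))) _ _
    (fun f => ?_)
  refine Finset.prod_congr rfl (fun i _ => ?_)
  rw [blockMat_eq α hsum A i]
  simp only [Equiv.arrowCongr_apply, Equiv.coe_refl, Function.comp_apply, Function.comp,
    id_eq]
  rw [show (Equiv.symm σ) (σ i) = i from σ.symm_apply_apply i]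
  rfl

lemma cont_jIdx {g n : ℕ} (α : Fin g → ℕ) (hsum : ∑ t, α t = n) :
    cont (jIdx α hsum) = α := by
  funext t
  rw [cont]
  have hle : partialSum α ((t : ℕ) + 1) ≤ n := by
    rw [← hsum, ← partialSum_g α]; exact partialSum_mono α t.isLt
  have h1 : (Finset.univ.filter fun i : Fin n => jIdx α hsum i = t).card
      = (Finset.Ico (partialSum α (t : ℕ)) (partialSum α ((t : ℕ) + 1))).card := by
    refine Finset.card_bij (fun (i : Fin n) _ => (i : ℕ)) ?_ ?_ ?_
    · intro i hi
      simp only [Finset.mem_filter, Finset.mem_univ, true_and] at hi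
      have hspec := blockIdx_spec α (show (i : ℕ) < partialSum α g by
        rw [partialSum_g, hsum]; exact i.isLt)
      have : blockIdx α (i : ℕ) = (t : ℕ) := by
        rw [show blockIdx α (i : ℕ) = ((jIdx α hsum i) : ℕ) from rfl, hi]
      rw [Finset.mem_Ico, ← this]
      exact ⟨hspec.2.1, hspec.2.2⟩
    · intro a _ b _ hab; exact Fin.ext hab
    · intro x hx
      rw [Finset.mem_Ico] at hx
      have hxn : x < n := lt_of_lt_of_le hx.2 hle
      refine ⟨⟨x, hxn⟩, ?_, rfl⟩
      simp only [Finset.mem_filter, Finset.mem_univ, true_and]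
      exact Fin.ext (blockIdx_eq_of α t.isLt hx.1 hx.2)
  rw [h1, Nat.card_Ico, partialSum_succ α (t : ℕ) t.isLt]
  simp

variable {ι : Type*} [Fintype ι] [DecidableEq ι]

/-- the determinant of a principal submatrix -/
def minor (M : Matrix ι ι ℂ) (S : Finset ι) : ℂ :=
  (M.submatrix (fun x : {a // a ∈ S} => (x : ι)) (fun x : {a // a ∈ S} => (x : ι))).det

lemma extend_subtypePerm {S : Finset ι} (σ : Equiv.Perm ι) (h : ∀ x, x ∈ S ↔ σ x ∈ S)
    (hfix : ∀ i ∈ Finset.univ \ S, σ i = i) :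
    (σ.subtypePerm (fun x => (h x).symm)).extendDomain (Equiv.refl {a : ι // a ∈ S}) = σ := by
  ext x
  by_cases hx : x ∈ S
  · rw [Equiv.Perm.extendDomain_apply_subtype _ _ hx]; rfl
  · rw [Equiv.Perm.extendDomain_apply_not_subtype _ _ hx]
    exact (hfix x (by simpa using hx)).symm

lemma aux_term {S : Finset ι} (M : Matrix ι ι ℂ) (σ : Equiv.Perm ι)
    (h : ∀ x, x ∈ S ↔ σ x ∈ S) (hfix : ∀ i ∈ Finset.univ \ S, σ i = i) :
    Equiv.Perm.sign σ • ∏ i ∈ S, M (σ i) i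
      = Equiv.Perm.sign (σ.subtypePerm (fun x => (h x).symm)) •
        ∏ x : {a // a ∈ S}, (M.submatrix (fun x : {a // a ∈ S} => (x : ι))
          (fun x : {a // a ∈ S} => (x : ι))) ((σ.subtypePerm (fun x => (h x).symm)) x) x := by
  have hsign : Equiv.Perm.sign σ = Equiv.Perm.sign (σ.subtypePerm (fun x => (h x).symm)) := by
    conv_lhs => rw [← extend_subtypePerm σ h hfix]
    rw [Equiv.Perm.sign_extendDomain]
  rw [← hsign]
  congr 1
  rw [← Finset.prod_attach S (fun i => M (σ i) i), Finset.univ_eq_attach]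
  rfl

lemma subtype_mem_iff {S : Finset ι} {σ : Equiv.Perm ι} (hσ : ∀ i ∈ Finset.univ \ S, σ i = i) :
    ∀ x, x ∈ S ↔ σ x ∈ S := by
  intro x
  constructor
  · intro hx
    by_contra hnx
    have h1 : σ (σ x) = σ x := hσ _ (by simp [hnx])
    have h2 := σ.injective h1
    rw [h2] at hnx
    exact hnx hx
  · intro hx
    by_contra hnx
    rw [hσ x (by simp [hnx])] at hx
    exact hnx hx

lemma det_one_add (M : Matrix ι ι ℂ) :
    (1 + M).det = ∑ S : Finset ι, minor M S := by
  classical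
  rw [Matrix.det_apply]
  have step1 : ∀ σ : Equiv.Perm ι, (∏ i, (1 + M) (σ i) i)
      = ∑ S ∈ (Finset.univ : Finset ι).powerset,
          (∏ i ∈ S, M (σ i) i) * ∏ i ∈ Finset.univ \ S, (1 : Matrix ι ι ℂ) (σ i) i := by
    intro σ
    rw [← Finset.prod_add]
    exact Finset.prod_congr rfl fun i _ => by rw [Matrix.add_apply, add_comm]
  simp_rw [step1, Finset.smul_sum]
  rw [Finset.sum_comm, Finset.powerset_univ]
  refine Finset.sum_congr rfl fun S _ => ?_
  have hprod : ∀ σ : Equiv.Perm ι, (∏ i ∈ Finset.univ \ S, (1 : Matrix ι ι ℂ) (σ i) i)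
      = if ∀ i ∈ Finset.univ \ S, σ i = i then 1 else 0 := by
    intro σ
    split_ifs with h
    · exact Finset.prod_eq_one fun i hi => by rw [h i hi, Matrix.one_apply_eq]
    · push_neg at h
      obtain ⟨i, hi, hne⟩ := h
      exact Finset.prod_eq_zero hi (Matrix.one_apply_ne hne)
  simp_rw [hprod, mul_ite, mul_one, mul_zero, smul_ite, smul_zero]
  rw [← Finset.sum_filter]
  rw [minor, Matrix.det_apply]
  refine Finset.sum_bij'
    (i := fun σ hσ => Equiv.Perm.subtypePerm σ (fun x => (subtype_mem_iff (by
      simpa using (Finset.mem_filter.1 hσ).2) x).symm))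
    (j := fun π _ => Equiv.Perm.extendDomain π (Equiv.refl {a : ι // a ∈ S}))
    ?_ ?_ ?_ ?_ ?_
  · intro σ hσ; exact Finset.mem_univ _
  · intro π hπ
    simp only [Finset.mem_filter, Finset.mem_univ, true_and]
    intro i hi
    exact Equiv.Perm.extendDomain_apply_not_subtype _ _ (by simpa using hi)
  · intro σ hσ
    exact extend_subtypePerm σ (subtype_mem_iff (by simpa using (Finset.mem_filter.1 hσ).2))
      (by simpa using (Finset.mem_filter.1 hσ).2)
  · intro π hπ
    ext x
    obtain ⟨x, hx⟩ := x
    simp only [Equiv.Perm.subtypePerm_apply]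
    rw [Equiv.Perm.extendDomain_apply_subtype _ _ hx]
    rfl
  · intro σ hσ
    exact aux_term M σ (subtype_mem_iff (by simpa using (Finset.mem_filter.1 hσ).2))
      (by simpa using (Finset.mem_filter.1 hσ).2)

lemma sum_sign_det (M : Matrix ι ι ℂ) {n : ℕ} (f : Fin n → ι) :
    ∑ σ : Equiv.Perm (Fin n), ((Equiv.Perm.sign σ : ℤ) : ℂ) * ∏ i, M (f i) (f (σ i))
      = (M.submatrix f f).det := by
  rw [Matrix.det_apply]
  refine Fintype.sum_equiv (Equiv.inv (Equiv.Perm (Fin n))) _ _ (fun σ => ?_)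
  simp only [Equiv.inv_apply]
  rw [Equiv.Perm.sign_inv]
  rw [← Equiv.prod_comp σ (fun i => (M.submatrix f f) (σ⁻¹ i) i)]
  simp only [Matrix.submatrix_apply, Equiv.Perm.coe_inv, Equiv.symm_apply_apply]
  simp [Units.smul_def, zsmul_eq_mul]

lemma det_submatrix_noninj (M : Matrix ι ι ℂ) {n : ℕ} (f : Fin n → ι)
    (hf : ¬ Function.Injective f) : (M.submatrix f f).det = 0 := by
  obtain ⟨a, b, hab, hne⟩ := Function.not_injective_iff.1 hf
  refine Matrix.det_zero_of_row_eq hne ?_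
  funext j
  simp [Matrix.submatrix_apply, hab]

lemma sum_det_submatrix (M : Matrix ι ι ℂ) (n : ℕ) :
    ∑ f : Fin n → ι, (M.submatrix f f).det
      = ∑ S ∈ Finset.univ.filter (fun S : Finset ι => S.card = n),
          (n.factorial : ℂ) * minor M S := by
  classical
  rw [← Finset.sum_filter_add_sum_filter_not Finset.univ (fun f : Fin n → ι =>
    Function.Injective f)]
  rw [Finset.sum_eq_zero (fun f hf => det_submatrix_noninj M f
    (Finset.mem_filter.1 hf).2), add_zero]
  rw [← Finset.sum_fiberwise_of_maps_to (g := fun f : Fin n → ι => Finset.univ.image f)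
    (t := Finset.univ.filter (fun S : Finset ι => S.card = n)) ?_ _]
  · refine Finset.sum_congr rfl fun S hS => ?_
    have hScard : S.card = n := (Finset.mem_filter.1 hS).2
    have hcardS : Fintype.card {a // a ∈ S} = n := by
      rw [Fintype.card_coe]; exact hScard
    have hterm : ∀ f ∈ (Finset.univ.filter (fun f : Fin n → ι => Function.Injective f)).filter
        (fun f => Finset.univ.image f = S), (M.submatrix f f).det = minor M S := by
      intro f hf
      rw [Finset.mem_filter, Finset.mem_filter] at hf
      obtain ⟨⟨-, hinj⟩, himg⟩ := hf
      have hmem : ∀ i, f i ∈ S := fun i => by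
        rw [← himg]; exact Finset.mem_image_of_mem f (Finset.mem_univ i)
      have hbij : Function.Bijective (fun i => (⟨f i, hmem i⟩ : {a // a ∈ S})) := by
        rw [Fintype.bijective_iff_injective_and_card]
        exact ⟨fun a b hab => hinj (congrArg Subtype.val hab), by rw [hcardS, Fintype.card_fin]⟩
      let e : Fin n ≃ {a // a ∈ S} := Equiv.ofBijective _ hbij
      have : M.submatrix f f = ((M.submatrix (fun x : {a // a ∈ S} => (x : ι))
          (fun x : {a // a ∈ S} => (x : ι))).submatrix e e) := rfl
      rw [this, minor, Matrix.det_submatrix_equiv_self]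
    rw [Finset.sum_congr rfl hterm, Finset.sum_const]
    have hcount : ((Finset.univ.filter (fun f : Fin n → ι => Function.Injective f)).filter
        (fun f => Finset.univ.image f = S)).card = n.factorial := by
      rw [Finset.filter_filter]
      have h1 : (Finset.univ : Finset (Fin n ≃ {a // a ∈ S})).card =
          (Finset.univ.filter (fun f : Fin n → ι =>
            Function.Injective f ∧ Finset.univ.image f = S)).card := by
        refine Finset.card_nbij (fun e => fun i => ((e i : ι))) ?_ ?_ ?_
        · intro e _
          simp only [Finset.coe_filter, Set.mem_setOf_eq, Finset.mem_filter, Finset.mem_univ, true_and]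
          constructor
          · intro a b hab; exact e.injective (Subtype.ext hab)
          · ext x
            simp only [Finset.mem_image, Finset.mem_univ, true_and]
            constructor
            · rintro ⟨i, rfl⟩; exact (e i).prop
            · intro hx; exact ⟨e.symm ⟨x, hx⟩, by rw [Equiv.apply_symm_apply]⟩
        · intro e1 _ e2 _ h
          ext i
          exact congrFun h i
        · intro f hf
          simp only [Finset.coe_filter, Set.mem_setOf_eq, Finset.mem_univ, true_and] at hf
          obtain ⟨hinj, himg⟩ := hf
          have hmem : ∀ i, f i ∈ S := fun i => by
            rw [← himg]; exact Finset.mem_image_of_mem f (Finset.mem_univ i)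
          have hbij : Function.Bijective (fun i => (⟨f i, hmem i⟩ : {a // a ∈ S})) := by
            rw [Fintype.bijective_iff_injective_and_card]
            exact ⟨fun a b hab => hinj (congrArg Subtype.val hab),
              by rw [hcardS, Fintype.card_fin]⟩
          refine ⟨Equiv.ofBijective _ hbij, by simp, rfl⟩
      rw [← h1, Finset.card_univ,
        Fintype.card_equiv (Fintype.equivOfCardEq (show Fintype.card (Fin n) =
          Fintype.card {a // a ∈ S} by rw [Fintype.card_fin, hcardS])), Fintype.card_fin]
    rw [hcount]
    simp [mul_comm]
  · intro f hf
    rw [Finset.mem_filter] at hf ⊢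
    refine ⟨Finset.mem_univ _, ?_⟩
    rw [Finset.card_image_of_injective _ hf.2, Finset.card_univ, Fintype.card_fin]

end Aux

/-- **Lemma (homogeneous expansion of the pencil determinant).**
`det(I_k ⊗ I_d + Σⱼ Xⱼ ⊗ Uⱼ) = Σ_{n=0}^{kd} (1/n!) Σ_{|α|=n} binom(n,α)
  Σ_{σ ∈ S_n} sgn(σ) p_{σ,α}(X) p_{σ,α}(U)`. -/
theorem pencil_det_expansion (g k d : ℕ)
    (X : Fin g → Matrix (Fin k) (Fin k) ℂ) (U : Fin g → Matrix (Fin d) (Fin d) ℂ) :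
    Matrix.det (1 + ∑ j, X j ⊗ₖ U j) =
      ∑ n ∈ Finset.range (k * d + 1), (n.factorial : ℂ)⁻¹ *
        ∑ α ∈ Finset.Nat.antidiagonalTuple g n, (Nat.multinomial Finset.univ α : ℂ) *
          ∑ σ : Equiv.Perm (Fin n), ((Equiv.Perm.sign σ : ℤ) : ℂ) *
            (pPoly k n σ α X * pPoly d n σ α U) := by
  classical
  set M : Matrix (Fin k × Fin d) (Fin k × Fin d) ℂ := ∑ j, X j ⊗ₖ U j with hM
  rw [det_one_add M]
  rw [← Finset.sum_fiberwise_of_maps_to (g := fun S : Finset (Fin k × Fin d) => S.card)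
    (t := Finset.range (k * d + 1)) (fun S _ => by
      have h2 : (Finset.univ : Finset (Fin k × Fin d)).card = k * d := by
        rw [Finset.card_univ, Fintype.card_prod, Fintype.card_fin, Fintype.card_fin]
      exact Finset.mem_range.2 (Nat.lt_succ_of_le (by
        rw [← h2]; exact Finset.card_le_univ S))) (minor M)]
  refine Finset.sum_congr rfl fun n hn => ?_
  -- the key identity for fixed degree n
  have key : (∑ α ∈ Finset.Nat.antidiagonalTuple g n, (Nat.multinomial Finset.univ α : ℂ) *
      ∑ σ : Equiv.Perm (Fin n), ((Equiv.Perm.sign σ : ℤ) : ℂ) *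
        (pPoly k n σ α X * pPoly d n σ α U))
      = ∑ S ∈ Finset.univ.filter (fun S : Finset (Fin k × Fin d) => S.card = n),
          (n.factorial : ℂ) * minor M S := by
    -- G j := signed sum over permutations for the labelled tuple j
    set G : (Fin n → Fin g) → ℂ := fun j =>
      ∑ σ : Equiv.Perm (Fin n), ((Equiv.Perm.sign σ : ℤ) : ℂ) *
        pF σ (fun i => X (j i) ⊗ₖ U (j i)) with hG
    have hGinv : ∀ (j : Fin n → Fin g) (τ : Equiv.Perm (Fin n)), G (j ∘ ⇑τ) = G j := by
      intro j τ
      rw [hG]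
      simp only
      have hconj : ∀ σ : Equiv.Perm (Fin n),
          pF σ (fun i => X ((j ∘ ⇑τ) i) ⊗ₖ U ((j ∘ ⇑τ) i))
            = pF (τ * σ * τ⁻¹) (fun i => X (j i) ⊗ₖ U (j i)) :=
        fun σ => pF_conj σ τ (fun i => X (j i) ⊗ₖ U (j i))
      rw [Finset.sum_congr rfl fun σ _ => by rw [hconj σ]]
      refine Fintype.sum_equiv ((Equiv.mulLeft τ).trans (Equiv.mulRight τ⁻¹)) _ _ (fun σ => ?_)
      simp only [Equiv.trans_apply, Equiv.coe_mulLeft, Equiv.coe_mulRight]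
      congr 1
      rw [show τ * σ * τ⁻¹ = (τ * σ) * τ⁻¹ from rfl, Equiv.Perm.sign_mul,
        Equiv.Perm.sign_mul, Equiv.Perm.sign_inv]
      rcases Int.units_eq_one_or (Equiv.Perm.sign τ) with h | h <;>
        rcases Int.units_eq_one_or (Equiv.Perm.sign σ) with h' | h' <;>
        simp [h, h']
    have stepA : (∑ α ∈ Finset.Nat.antidiagonalTuple g n, (Nat.multinomial Finset.univ α : ℂ) *
        ∑ σ : Equiv.Perm (Fin n), ((Equiv.Perm.sign σ : ℤ) : ℂ) *
          (pPoly k n σ α X * pPoly d n σ α U))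
        = ∑ j : Fin n → Fin g, G j := by
      rw [← Finset.sum_fiberwise_of_maps_to (g := fun j : Fin n → Fin g => cont j)
        (t := Finset.Nat.antidiagonalTuple g n)
        (fun j _ => Finset.Nat.mem_antidiagonalTuple.2 (sum_cont j)) G]
      rw [← Finset.sum_attach (Finset.Nat.antidiagonalTuple g n)
        (fun α => (Nat.multinomial Finset.univ α : ℂ) *
          ∑ σ : Equiv.Perm (Fin n), ((Equiv.Perm.sign σ : ℤ) : ℂ) *
            (pPoly k n σ α X * pPoly d n σ α U)),
        ← Finset.sum_attach (Finset.Nat.antidiagonalTuple g n)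
        (fun α => ∑ j ∈ Finset.univ.filter (fun j : Fin n → Fin g => cont j = α), G j)]
      refine Finset.sum_congr rfl fun x _ => ?_
      have hsum : ∑ t, x.1 t = n := Finset.Nat.mem_antidiagonalTuple.1 x.2
      have hL : (∑ σ : Equiv.Perm (Fin n), ((Equiv.Perm.sign σ : ℤ) : ℂ) *
          (pPoly k n σ x.1 X * pPoly d n σ x.1 U)) = G (jIdx x.1 hsum) := by
        rw [hG]
        refine Finset.sum_congr rfl fun σ _ => ?_
        rw [pPoly_eq_pF σ x.1 hsum X, pPoly_eq_pF σ x.1 hsum U, pF_kron]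
      rw [hL]
      have hfib : ∀ j ∈ Finset.univ.filter (fun j : Fin n → Fin g => cont j = x.1),
          G j = G (jIdx x.1 hsum) := by
        intro j hj
        have hcj : cont j = x.1 := (Finset.mem_filter.1 hj).2
        obtain ⟨τ, hτ⟩ := exists_perm_comp (jIdx x.1 hsum) j (by rw [cont_jIdx, hcj])
        rw [← hτ]
        exact hGinv _ τ
      rw [Finset.sum_congr rfl hfib, Finset.sum_const,
        card_cont_eq x.1 (jIdx x.1 hsum) (cont_jIdx x.1 hsum), nsmul_eq_mul]
    rw [stepA]
    have stepB : ∑ j : Fin n → Fin g, G j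
        = ∑ σ : Equiv.Perm (Fin n), ((Equiv.Perm.sign σ : ℤ) : ℂ) *
            pF σ (fun _ => M) := by
      rw [hG, Finset.sum_comm]
      refine Finset.sum_congr rfl fun σ _ => ?_
      rw [← Finset.mul_sum, pF_sum σ (fun t => X t ⊗ₖ U t)]
    rw [stepB]
    have stepC : ∑ σ : Equiv.Perm (Fin n), ((Equiv.Perm.sign σ : ℤ) : ℂ) *
        pF σ (fun _ => M) = ∑ f : Fin n → Fin k × Fin d, (M.submatrix f f).det := by
      unfold pF
      simp_rw [Finset.mul_sum]
      rw [Finset.sum_comm]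
      exact Finset.sum_congr rfl fun f _ => sum_sign_det M f
    rw [stepC, sum_det_submatrix M n]

  rw [key, ← Finset.mul_sum, ← mul_assoc,
    inv_mul_cancel₀ (by exact_mod_cast Nat.factorial_ne_zero n), one_mul]
end
end
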